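/- There exists an absolute constant c > 0 such that the following holds. Let S be a finite set and let D be a family of Boolean functions on S containing the two constant functions, with VC dimension ρ ≥ 1, and let ε ∈ (0,1/8). If |S| > c·(ρ/ε²)·log²(ρ/ε²), then there exist two probability distributions q₁ and q₂ supported on S with disjoint supports such that IPM_D(q₁,q₂) < ε. -/

import Mathlib

open scoped BigOperators

namespace GraphDisc

/-- A `k`-distinguisher is symmetric: invariant under all permutations of arguments. -/
def IsSymmetric {V : Type*} {k : ℕ} (g : (Fin k → V) → Bool) : Prop :=
  ∀ (σ : Equiv.Perm (Fin k)) (w : Fin k → V), g (w ∘ σ) = g w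

/-- A `k`-distinguishing class: a family of symmetric Boolean `k`-ary functions. -/
def IsDistinguishingClass {V : Type*} {k : ℕ} (G : Set ((Fin k → V) → Bool)) : Prop :=
  ∀ g ∈ G, IsSymmetric g

/-- `p` is a probability distribution on `V` (as a mass function). -/
def IsDist {V : Type*} (p : V → ℝ) : Prop := (∀ v, 0 ≤ p v) ∧ HasSum p 1

/-- `L_P(g)`: expected value of `g` on a `k`-tuple of i.i.d. samples from `p`. -/
noncomputable def LP {V : Type*} {k : ℕ} (p : V → ℝ) (g : (Fin k → V) → Bool) : ℝ :=
  ∑' w : Fin k → V, (∏ i, p (w i)) * (if g w then 1 else 0)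

/-- `L_S(g)`: empirical frequency of `g` on all `k`-tuples from the sample `S`. -/
noncomputable def LS {V : Type*} {k m : ℕ} (S : Fin m → V) (g : (Fin k → V) → Bool) : ℝ :=
  (∑ t : Fin k → Fin m, if g (S ∘ t) then (1 : ℝ) else 0) / (m : ℝ) ^ k

/-- Probability of an event `E` under an i.i.d. sample of size `m` from `p`. -/
noncomputable def Prob {V : Type*} (p : V → ℝ) {m : ℕ} (E : Set (Fin m → V)) : ℝ :=
  ∑' S : Fin m → V, E.indicator (fun S => ∏ i, p (S i)) S

/-- Probability of an event `E` under two independent i.i.d. samples of size `m`. -/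
noncomputable def Prob2 {V : Type*} (p₁ p₂ : V → ℝ) {m : ℕ}
    (E : Set ((Fin m → V) × (Fin m → V))) : ℝ :=
  ∑' S : (Fin m → V) × (Fin m → V),
    E.indicator (fun S => (∏ i, p₁ (S.1 i)) * ∏ i, p₂ (S.2 i)) S

/-- IPM distance induced by a class of `k`-ary distinguishers. -/
noncomputable def IPM {V : Type*} {k : ℕ} (G : Set ((Fin k → V) → Bool))
    (p₁ p₂ : V → ℝ) : ℝ :=
  ⨆ g ∈ G, |LP p₁ g - LP p₂ g|

/-- `L_P(d)` for a unary Boolean function `d`. -/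
noncomputable def LP1 {V : Type*} (p : V → ℝ) (d : V → Bool) : ℝ :=
  ∑' v : V, p v * (if d v then 1 else 0)

/-- IPM distance for a family of unary Boolean functions. -/
noncomputable def IPM1 {V : Type*} (D : Set (V → Bool)) (p₁ p₂ : V → ℝ) : ℝ :=
  ⨆ d ∈ D, |LP1 p₁ d - LP1 p₂ d|

/-- `L_P(g)` for a binary (curried) Boolean function `g`. -/
noncomputable def LP2 {V : Type*} (p : V → ℝ) (g : V → V → Bool) : ℝ :=
  ∑' w : V × V, (p w.1 * p w.2) * (if g w.1 w.2 then 1 else 0)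

/-- `D` shatters the finite set `T`: every Boolean pattern on `T` is realized in `D`. -/
def Shatters {X : Type*} (D : Set (X → Bool)) (T : Finset X) : Prop :=
  ∀ f : X → Bool, ∃ d ∈ D, ∀ x ∈ T, d x = f x

/-- The VC dimension of a family of Boolean functions. -/
noncomputable def vcDim {X : Type*} (D : Set (X → Bool)) : ℕ∞ :=
  ⨆ T ∈ {T : Finset X | Shatters D T}, (T.card : ℕ∞)

/-- Fixing the first argument of a `(k+1)`-ary function to `v`. -/
def proj {V : Type*} {k : ℕ} (v : V) (g : (Fin (k + 1) → V) → Bool) :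
    (Fin k → V) → Bool := fun u => g (Fin.cons v u)

/-- The graph VC dimension, defined inductively: for `k = 1` it is the usual VC
dimension; for `k > 1` it is the supremum over `v` of the graph VC dimension of the
projected class `G_v`. -/
noncomputable def gvcDim {V : Type*} : (k : ℕ) → Set ((Fin k → V) → Bool) → ℕ∞
  | 0, G => vcDim G
  | 1, G => vcDim G
  | (k + 2), G => ⨆ v : V, gvcDim (k + 1) (proj v '' G)

open Classical in
/-- Mixture `q·δ_v + (1−q)·p`. -/
noncomputable def mix {V : Type*} (q : ℝ) (v : V) (p : V → ℝ) : V → ℝ :=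
  fun u => q * (if u = v then 1 else 0) + (1 - q) * p u

/-- The class of majority-vote threshold functions over `m`-tuples from `D`. -/
noncomputable def thresholdClass {V : Type*} (D : Set (V → Bool)) (m : ℕ) :
    Set (V → Bool) :=
  {h | ∃ d : Fin m → (V → Bool), (∀ i, d i ∈ D) ∧
        h = fun v => decide ((0 : ℝ) ≤ ∑ i, (2 * (if d i v then (1 : ℝ) else 0) - 1))}


section Aux

open Finset

private noncomputable def Xd {V : Type} [Fintype V] (d : V → Bool) (χ : V → Bool) : ℝ :=
  ∑ v, (if χ v then (1:ℝ) else -1) * (if d v then 1 else 0)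

private lemma exp_sum_le (V : Type) [Fintype V] [DecidableEq V] (d : V → Bool) (lam : ℝ) :
    ∑ χ : V → Bool, Real.exp (lam * Xd d χ)
      ≤ (2:ℝ) ^ (Fintype.card V) * Real.exp (Fintype.card V * lam ^ 2 / 2) := by
  have h1 : ∀ χ : V → Bool, Real.exp (lam * Xd d χ)
      = ∏ v, Real.exp (lam * ((if χ v then (1:ℝ) else -1) * (if d v then 1 else 0))) := by
    intro χ
    rw [Xd, Finset.mul_sum, Real.exp_sum]
  calc ∑ χ : V → Bool, Real.exp (lam * Xd d χ)
      = ∑ χ : V → Bool, ∏ v,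
        Real.exp (lam * ((if χ v then (1:ℝ) else -1) * (if d v then 1 else 0))) := by
        exact Finset.sum_congr rfl fun χ _ => h1 χ
    _ = ∏ v : V, ∑ b : Bool,
        Real.exp (lam * ((if b then (1:ℝ) else -1) * (if d v then 1 else 0))) := by
        rw [Fintype.prod_sum]
    _ ≤ ∏ v : V, (2 * Real.exp (lam ^ 2 / 2)) := by
        apply Finset.prod_le_prod
        · intro v _
          positivity
        · intro v _
          rw [Fintype.sum_bool]
          by_cases hd : d v
          · have := Real.cosh_le_exp_half_sq lam
            rw [Real.cosh_eq] at this
            simp only [hd]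
            norm_num
            nlinarith [this]
          · simp only [hd]
            norm_num
            positivity
    _ = (2:ℝ) ^ (Fintype.card V) * Real.exp (Fintype.card V * lam ^ 2 / 2) := by
        rw [Finset.prod_const, Finset.card_univ, mul_pow, ← Real.exp_nat_mul]
        congr 1
        ring

private lemma bad_count (V : Type) [Fintype V] [DecidableEq V] (d : V → Bool) (Δ : ℝ)
    (hΔ : 0 < Δ) (hn : 0 < Fintype.card V) :
    ((univ.filter (fun χ : V → Bool => Δ < |Xd d χ|)).card : ℝ)
      ≤ 2 * 2 ^ (Fintype.card V) * Real.exp (-(Δ^2) / (2 * Fintype.card V)) := by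
  set n : ℝ := (Fintype.card V : ℝ) with hnr
  have hn0 : (0:ℝ) < n := by rw [hnr]; exact_mod_cast hn
  set lam : ℝ := Δ / n with hlam
  have hlam0 : 0 < lam := div_pos hΔ hn0
  have key : ∀ χ ∈ univ.filter (fun χ : V → Bool => Δ < |Xd d χ|),
      Real.exp (lam * Δ) ≤ Real.exp (lam * Xd d χ) + Real.exp ((-lam) * Xd d χ) := by
    intro χ hχ
    rw [Finset.mem_filter] at hχ
    have habs := hχ.2
    rcases le_or_gt 0 (Xd d χ) with h | h
    · rw [abs_of_nonneg h] at habs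
      have : Real.exp (lam * Δ) ≤ Real.exp (lam * Xd d χ) :=
        Real.exp_le_exp.2 (by nlinarith)
      nlinarith [Real.exp_pos ((-lam) * Xd d χ)]
    · rw [abs_of_neg h] at habs
      have : Real.exp (lam * Δ) ≤ Real.exp ((-lam) * Xd d χ) :=
        Real.exp_le_exp.2 (by nlinarith)
      nlinarith [Real.exp_pos (lam * Xd d χ)]
  have step1 : ((univ.filter (fun χ : V → Bool => Δ < |Xd d χ|)).card : ℝ) * Real.exp (lam * Δ)
      ≤ 2 * 2 ^ (Fintype.card V) * Real.exp (n * lam ^ 2 / 2) := by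
    calc ((univ.filter (fun χ : V → Bool => Δ < |Xd d χ|)).card : ℝ) * Real.exp (lam * Δ)
        = ∑ _χ ∈ univ.filter (fun χ : V → Bool => Δ < |Xd d χ|), Real.exp (lam * Δ) := by
          rw [Finset.sum_const, nsmul_eq_mul]
      _ ≤ ∑ χ ∈ univ.filter (fun χ : V → Bool => Δ < |Xd d χ|),
          (Real.exp (lam * Xd d χ) + Real.exp ((-lam) * Xd d χ)) := Finset.sum_le_sum key
      _ ≤ ∑ χ : V → Bool, (Real.exp (lam * Xd d χ) + Real.exp ((-lam) * Xd d χ)) := by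
          apply Finset.sum_le_sum_of_subset_of_nonneg (Finset.filter_subset _ _)
          intro χ _ _
          positivity
      _ = (∑ χ : V → Bool, Real.exp (lam * Xd d χ))
          + ∑ χ : V → Bool, Real.exp ((-lam) * Xd d χ) := Finset.sum_add_distrib
      _ ≤ (2:ℝ) ^ (Fintype.card V) * Real.exp (Fintype.card V * lam ^ 2 / 2)
          + (2:ℝ) ^ (Fintype.card V) * Real.exp (Fintype.card V * (-lam) ^ 2 / 2) :=
          add_le_add (exp_sum_le V d lam) (exp_sum_le V d (-lam))
      _ = 2 * 2 ^ (Fintype.card V) * Real.exp (n * lam ^ 2 / 2) := by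
          rw [neg_pow, hnr]; ring_nf
  have harg : n * lam ^ 2 / 2 - lam * Δ = -(Δ^2) / (2 * n) := by
    rw [hlam]; field_simp; ring
  have := mul_le_mul_of_nonneg_right step1 (le_of_lt (Real.exp_pos (-(lam * Δ))))
  rw [mul_assoc, ← Real.exp_add, mul_assoc, ← Real.exp_add] at this
  rw [add_neg_cancel, Real.exp_zero, mul_one] at this
  calc ((univ.filter (fun χ : V → Bool => Δ < |Xd d χ|)).card : ℝ)
      ≤ 2 * 2 ^ (Fintype.card V) * Real.exp (n * lam ^ 2 / 2 + -(lam * Δ)) := this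
    _ = 2 * 2 ^ (Fintype.card V) * Real.exp (-(Δ^2) / (2 * n)) := by
        rw [← harg]; ring_nf

private lemma disc (V : Type) [Fintype V] [DecidableEq V] (Dfin : Finset (V → Bool)) (Δ : ℝ)
    (hΔ : 0 < Δ) (hn : 0 < Fintype.card V)
    (hprob : (Dfin.card : ℝ) * (2 * Real.exp (-(Δ^2) / (2 * Fintype.card V))) < 1) :
    ∃ χ : V → Bool, ∀ d ∈ Dfin, |Xd d χ| ≤ Δ := by
  by_contra hcon
  push_neg at hcon
  have hsub : (univ : Finset (V → Bool)) ⊆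
      Dfin.biUnion (fun d => univ.filter (fun χ : V → Bool => Δ < |Xd d χ|)) := by
    intro χ _
    obtain ⟨d, hd, hgt⟩ := hcon χ
    exact Finset.mem_biUnion.2 ⟨d, hd, Finset.mem_filter.2 ⟨Finset.mem_univ _, hgt⟩⟩
  have hcard : ((2:ℝ) ^ (Fintype.card V))
      ≤ (Dfin.card : ℝ) * (2 * 2 ^ (Fintype.card V) * Real.exp (-(Δ^2) / (2 * Fintype.card V))) := by
    have h1 : (univ : Finset (V → Bool)).card ≤
        ∑ d ∈ Dfin, (univ.filter (fun χ : V → Bool => Δ < |Xd d χ|)).card :=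
      le_trans (Finset.card_le_card hsub) (Finset.card_biUnion_le)
    have h2 : ((univ : Finset (V → Bool)).card : ℝ) = 2 ^ (Fintype.card V) := by
      rw [Finset.card_univ, Fintype.card_fun]
      push_cast
      simp
    calc ((2:ℝ) ^ (Fintype.card V))
        = ((univ : Finset (V → Bool)).card : ℝ) := h2.symm
      _ ≤ ∑ d ∈ Dfin, ((univ.filter (fun χ : V → Bool => Δ < |Xd d χ|)).card : ℝ) := by
          exact_mod_cast h1
      _ ≤ ∑ _d ∈ Dfin, 2 * 2 ^ (Fintype.card V) * Real.exp (-(Δ^2) / (2 * Fintype.card V)) :=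
          Finset.sum_le_sum (fun d _ => bad_count V d Δ hΔ hn)
      _ = (Dfin.card : ℝ) * (2 * 2 ^ (Fintype.card V) * Real.exp (-(Δ^2) / (2 * Fintype.card V))) := by
          rw [Finset.sum_const, nsmul_eq_mul]
  have hpow : (0:ℝ) < 2 ^ (Fintype.card V) := by positivity
  nlinarith [hcard, hprob, hpow, Real.exp_pos (-(Δ^2) / (2 * (Fintype.card V:ℝ)))]

private lemma sauer_bound (V : Type) [Fintype V] [DecidableEq V] (Dfin : Finset (V → Bool)) (ρ : ℕ)
    (hsh : ∀ T : Finset V, (∀ f : V → Bool, ∃ d ∈ Dfin, ∀ x ∈ T, d x = f x) → T.card ≤ ρ) :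
    Dfin.card ≤ (ρ + 1) * (Fintype.card V + 1) ^ ρ := by
  set F : (V → Bool) → Finset V := fun d => univ.filter (fun v => d v = true) with hF
  set 𝒜 : Finset (Finset V) := Dfin.image F with h𝒜
  have hinj : Set.InjOn F Dfin := by
    intro d _ e _ h
    funext v
    have hv : v ∈ F d ↔ v ∈ F e := by rw [h]
    simp only [hF, Finset.mem_filter, Finset.mem_univ, true_and] at hv
    cases hdv : d v <;> cases hev : e v <;> simp_all
  have hcard : 𝒜.card = Dfin.card := Finset.card_image_of_injOn hinj
  have hvc : 𝒜.vcDim ≤ ρ := by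
    apply Finset.sup_le
    intro s hs
    rw [Finset.mem_shatterer] at hs
    apply hsh
    intro f
    obtain ⟨u, hu𝒜, hsu⟩ := hs (show s.filter (fun x => f x = true) ⊆ s from filter_subset _ _)
    obtain ⟨d, hdD, rfl⟩ := Finset.mem_image.1 hu𝒜
    refine ⟨d, hdD, fun x hx => ?_⟩
    have h1 : x ∈ s ∩ F d ↔ x ∈ s.filter (fun x => f x = true) := by rw [hsu]
    simp only [hF, Finset.mem_inter, Finset.mem_filter, Finset.mem_univ, true_and, hx] at h1
    cases hdx : d x <;> cases hfx : f x <;> simp_all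
  calc Dfin.card = 𝒜.card := hcard.symm
    _ ≤ 𝒜.shatterer.card := Finset.card_le_card_shatterer 𝒜
    _ ≤ ∑ k ∈ Iic 𝒜.vcDim, (Fintype.card V).choose k := Finset.card_shatterer_le_sum_vcDim
    _ ≤ ∑ k ∈ Iic ρ, (Fintype.card V).choose k :=
        Finset.sum_le_sum_of_subset (Finset.Iic_subset_Iic.2 hvc)
    _ ≤ ∑ _k ∈ Iic ρ, (Fintype.card V + 1) ^ ρ := by
        apply Finset.sum_le_sum
        intro k hk
        calc (Fintype.card V).choose k ≤ (Fintype.card V) ^ k := Nat.choose_le_pow _ _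
          _ ≤ (Fintype.card V + 1) ^ k := Nat.pow_le_pow_left (Nat.le_succ _) k
          _ ≤ (Fintype.card V + 1) ^ ρ := Nat.pow_le_pow_right (Nat.le_add_left _ _)
              (Finset.mem_Iic.1 hk)
    _ = (ρ + 1) * (Fintype.card V + 1) ^ ρ := by
        rw [Finset.sum_const, Nat.card_Iic, smul_eq_mul]

private lemma log_gt (x : ℝ) (hx : 64 < x) : 4 < Real.log x := by
  have h1 : (4:ℝ) < Real.log 64 := by
    rw [show (64:ℝ) = 2^6 by norm_num, Real.log_pow]
    push_cast
    nlinarith [Real.log_two_gt_d9]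
  exact lt_of_lt_of_le h1 (Real.log_le_log (by norm_num) hx.le)

private lemma log_ineq (x n : ℝ) (hx : 64 < x) (hn : 4000 * x * (Real.log x)^2 < n) :
    2048 * x * Real.log n < n := by
  have hx0 : (0:ℝ) < x := by linarith
  have hlx : 4 < Real.log x := log_gt x hx
  have hn0 : (0:ℝ) < n := by nlinarith
  have ht : (0:ℝ) < 4096 * x := by positivity
  have h1 : Real.log n = Real.log (n / (4096 * x)) + Real.log (4096 * x) := by
    rw [← Real.log_mul (by positivity) (ne_of_gt ht)]
    congr 1
    field_simp
  have h2 : Real.log (n / (4096 * x)) ≤ n / (4096 * x) := by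
    have := Real.log_le_sub_one_of_pos (show (0:ℝ) < n / (4096 * x) by positivity)
    linarith
  have h3 : Real.log (4096 * x) = Real.log 4096 + Real.log x :=
    Real.log_mul (by norm_num) (ne_of_gt hx0)
  have h4 : Real.log 4096 < 8.32 := by
    rw [show (4096:ℝ) = 2^12 by norm_num, Real.log_pow]
    push_cast
    nlinarith [Real.log_two_lt_d9]
  have hlog : Real.log n ≤ n / (4096 * x) + 8.32 + Real.log x := by
    rw [h1, h3] at *
    linarith
  have hdiv : 2048 * x * (n / (4096 * x)) = n / 2 := by
    field_simp
    ring
  have hmul := mul_le_mul_of_nonneg_left hlog (by positivity : (0:ℝ) ≤ 2048 * x)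
  nlinarith [mul_pos hx0 (show (0:ℝ) < Real.log x - 4 by linarith),
    mul_pos (mul_pos hx0 (show (0:ℝ) < Real.log x by linarith))
      (show (0:ℝ) < Real.log x - 4 by linarith)]

private lemma final_est (ε Δ p q α β : ℝ) (hε0 : 0 < ε)
    (hp0 : 0 < p) (hq0 : 0 < q) (hα0 : 0 ≤ α) (hβ0 : 0 ≤ β) (hαp : α ≤ p) (hβq : β ≤ q)
    (hαβ : |α - β| ≤ Δ) (hΔq : 4 * Δ ≤ ε * q) (hΔp : 4 * Δ ≤ ε * p)
    (hbal1 : -Δ ≤ p - q) (hbal2 : p - q ≤ Δ) :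
    |α / p - β / q| ≤ ε / 2 := by
  have hΔ0 : 0 ≤ Δ := le_trans (abs_nonneg _) hαβ
  rw [abs_le] at hαβ
  rw [div_sub_div _ _ (ne_of_gt hp0) (ne_of_gt hq0), abs_div,
    abs_of_pos (mul_pos hp0 hq0), div_le_iff₀ (mul_pos hp0 hq0), abs_le]
  constructor
  · have h1 : α * q - p * β = q * (α - β) + β * (q - p) := by ring
    have h2 : -(q * Δ) ≤ q * (α - β) := by nlinarith
    have h3 : -(q * Δ) ≤ β * (q - p) := by nlinarith
    nlinarith
  · have h1 : α * q - p * β = α * (q - p) + p * (α - β) := by ring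
    have h2 : α * (q - p) ≤ p * Δ := by nlinarith
    have h3 : p * (α - β) ≤ p * Δ := by nlinarith
    nlinarith
end Aux

set_option maxHeartbeats 1000000 in
/-- disjointly supported indistinguishable distributions over a large enough
finite domain (Lemma `disjoint_improved`). -/
theorem stmt15 :
    ∃ c : ℝ, 0 < c ∧
      ∀ (V : Type) [Fintype V] (D : Set (V → Bool)),
        (fun _ => false) ∈ D → (fun _ => true) ∈ D →
        ∀ ρ : ℕ, 1 ≤ ρ → vcDim D = (ρ : ℕ∞) →
        ∀ ε : ℝ, 0 < ε → ε < 1 / 8 →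
        (Fintype.card V : ℝ) > c * ((ρ : ℝ) / ε ^ 2) * (Real.log ((ρ : ℝ) / ε ^ 2)) ^ 2 →
        ∃ q₁ q₂ : V → ℝ, IsDist q₁ ∧ IsDist q₂ ∧
          Disjoint (Function.support q₁) (Function.support q₂) ∧
          IPM1 D q₁ q₂ < ε := by
  classical
  refine ⟨4000, by norm_num, ?_⟩
  intro V _ D hfalse htrue ρ hρ hvc ε hε0 hε8 hcard
  letI : DecidableEq V := Classical.decEq V
  set N : ℝ := (Fintype.card V : ℝ) with hN
  set x : ℝ := (ρ : ℝ) / ε ^ 2 with hxdef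
  have hρ1 : (1:ℝ) ≤ (ρ:ℝ) := by exact_mod_cast hρ
  have hε2 : ε ^ 2 < 1 / 64 := by nlinarith
  have hε2pos : (0:ℝ) < ε ^ 2 := by positivity
  have hx64 : 64 < x := by
    rw [hxdef, lt_div_iff₀ hε2pos]
    nlinarith
  have hlx : 4 < Real.log x := log_gt x hx64
  have hNlog : 2048 * x * Real.log N < N := log_ineq x N hx64 hcard
  have hN0 : (0:ℝ) < N := by nlinarith
  have hN2 : (2:ℝ) ≤ N := by nlinarith
  have hncard : 0 < Fintype.card V := by
    rcases Nat.eq_zero_or_pos (Fintype.card V) with h | h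
    · rw [hN, h] at hN0; norm_num at hN0
    · exact h
  have hlogN : Real.log 2 ≤ Real.log N := Real.log_le_log (by norm_num) (by linarith)
  have hlogN0 : (0:ℝ) < Real.log N :=
    lt_of_lt_of_le (Real.log_pos (by norm_num)) hlogN
  -- the finite family
  set Dfin : Finset (V → Bool) := Set.Finite.toFinset (Set.toFinite D) with hDfin
  have hmem : ∀ d, d ∈ Dfin ↔ d ∈ D := fun d => Set.Finite.mem_toFinset _
  have hshat : ∀ T : Finset V, (∀ f : V → Bool, ∃ d ∈ Dfin, ∀ x ∈ T, d x = f x) →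
      T.card ≤ ρ := by
    intro T hT
    have hTs : Shatters D T := by
      intro f
      obtain ⟨d, hd, h⟩ := hT f
      exact ⟨d, (hmem d).1 hd, h⟩
    have hle : (T.card : ℕ∞) ≤ vcDim D := by
      rw [vcDim]
      exact le_iSup₂ (f := fun (T : Finset V) (_ : T ∈ {T : Finset V | Shatters D T}) =>
        (T.card : ℕ∞)) T hTs
    rw [hvc] at hle
    exact_mod_cast hle
  have hDcard : Dfin.card ≤ (ρ + 1) * (Fintype.card V + 1) ^ ρ := sauer_bound V Dfin ρ hshat
  have hD1 : 1 ≤ Dfin.card := Finset.card_pos.2 ⟨fun _ => true, (hmem _).2 htrue⟩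
  have hDreal : (1:ℝ) ≤ (Dfin.card : ℝ) := by exact_mod_cast hD1
  -- logarithmic bound on the size of the family
  have hlogD : Real.log (2 * Dfin.card) < ε ^ 2 * N / 512 := by
    have hb : (2 * Dfin.card : ℝ) ≤ 2 * (((ρ:ℝ) + 1) * (N + 1) ^ ρ) := by
      have := hDcard
      have h2 : ((Dfin.card : ℝ)) ≤ (((ρ:ℝ) + 1) * (N + 1) ^ ρ) := by
        rw [hN]; exact_mod_cast this
      linarith
    have hpos1 : (0:ℝ) < (ρ:ℝ) + 1 := by linarith
    have hpos2 : (0:ℝ) < (N + 1) ^ ρ := by positivity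
    have hlog1 : Real.log (2 * Dfin.card) ≤
        Real.log (2 * (((ρ:ℝ) + 1) * (N + 1) ^ ρ)) :=
      Real.log_le_log (by positivity) hb
    have hsplit : Real.log (2 * (((ρ:ℝ) + 1) * (N + 1) ^ ρ)) =
        Real.log 2 + Real.log ((ρ:ℝ) + 1) + (ρ:ℝ) * Real.log (N + 1) := by
      rw [Real.log_mul (by norm_num) (by positivity), Real.log_mul (by positivity)
        (by positivity), Real.log_pow]
      push_cast
      ring
    have hρpow : ((ρ:ℝ) + 1) ≤ N ^ ρ := by
      have h1 : ((ρ:ℝ) + 1) ≤ (2:ℝ) ^ ρ := by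
        have := Nat.lt_two_pow_self (n := ρ)
        have h2 : (ρ:ℝ) < (2:ℝ) ^ ρ := by exact_mod_cast this
        have h3 : (1:ℝ) ≤ (2:ℝ) ^ ρ := one_le_pow₀ (by norm_num)
        -- ρ + 1 ≤ 2^ρ since ρ < 2^ρ and both are integers
        have h4 : (ρ + 1 : ℕ) ≤ 2 ^ ρ := Nat.lt_two_pow_self (n := ρ)
        exact_mod_cast h4
      exact h1.trans (pow_le_pow_left₀ (by norm_num) hN2 ρ)
    have hlog2 : Real.log ((ρ:ℝ) + 1) ≤ (ρ:ℝ) * Real.log N := by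
      calc Real.log ((ρ:ℝ) + 1) ≤ Real.log (N ^ ρ) := Real.log_le_log (by positivity) hρpow
        _ = (ρ:ℝ) * Real.log N := by rw [Real.log_pow]
    have hlog3 : Real.log (N + 1) ≤ 2 * Real.log N := by
      calc Real.log (N + 1) ≤ Real.log (N ^ 2) := Real.log_le_log (by linarith) (by nlinarith)
        _ = 2 * Real.log N := by rw [Real.log_pow]; push_cast; ring
    have hmain : Real.log (2 * Dfin.card) ≤ 4 * (ρ:ℝ) * Real.log N := by
      rw [hsplit] at hlog1
      have : (ρ:ℝ) * Real.log (N + 1) ≤ (ρ:ℝ) * (2 * Real.log N) :=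
        mul_le_mul_of_nonneg_left hlog3 (by linarith)
      nlinarith
    have hfin : 4 * (ρ:ℝ) * Real.log N < ε ^ 2 * N / 512 := by
      have hxρ : (ρ:ℝ) = x * ε ^ 2 := by
        rw [hxdef]; field_simp
      rw [hxρ]
      nlinarith [mul_lt_mul_of_pos_right hNlog hε2pos]
    linarith
  -- apply the discrepancy lemma
  set Δ : ℝ := ε * N / 16 with hΔdef
  have hΔ0 : 0 < Δ := by rw [hΔdef]; positivity
  have hprob : (Dfin.card : ℝ) * (2 * Real.exp (-(Δ^2) / (2 * Fintype.card V))) < 1 := by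
    have harg : -(Δ^2) / (2 * N) = -(ε ^ 2 * N / 512) := by
      rw [hΔdef]
      field_simp
      ring
    have hexp : 2 * (Dfin.card : ℝ) < Real.exp (ε ^ 2 * N / 512) := by
      rw [← Real.exp_log (show (0:ℝ) < 2 * (Dfin.card:ℝ) by linarith)]
      exact Real.exp_lt_exp.2 hlogD
    have h5 := mul_lt_mul_of_pos_right hexp (Real.exp_pos (-(ε ^ 2 * N / 512)))
    rw [← Real.exp_add, add_neg_cancel, Real.exp_zero] at h5
    calc (Dfin.card : ℝ) * (2 * Real.exp (-(Δ^2) / (2 * Fintype.card V)))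
        = 2 * (Dfin.card:ℝ) * Real.exp (-(ε ^ 2 * N / 512)) := by
          rw [show ((2:ℝ) * (Fintype.card V:ℝ)) = 2 * N from rfl, harg]; ring
      _ < 1 := h5
  obtain ⟨χ, hχ⟩ := disc V Dfin Δ hΔ0 hncard hprob
  -- build the distributions
  set p : ℝ := ∑ v : V, (if χ v then (1:ℝ) else 0) with hpdef
  set q : ℝ := ∑ v : V, (if χ v then (0:ℝ) else 1) with hqdef
  have hpq : p + q = N := by
    rw [hpdef, hqdef, ← Finset.sum_add_distrib]
    have : ∀ v : V, ((if χ v then (1:ℝ) else 0) + (if χ v then (0:ℝ) else 1)) = 1 := by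
      intro v; split_ifs <;> ring
    rw [Finset.sum_congr rfl (fun v _ => this v), Finset.sum_const, Finset.card_univ,
      nsmul_eq_mul, mul_one]
  have hpmq : p - q = Xd (fun _ => true) χ := by
    rw [hpdef, hqdef, ← Finset.sum_sub_distrib, Xd]
    apply Finset.sum_congr rfl
    intro v _
    split_ifs <;> simp_all
  have hbal : |p - q| ≤ Δ := by
    rw [hpmq]
    exact hχ _ ((hmem _).2 htrue)
  have hΔN : Δ ≤ N / 128 := by
    rw [hΔdef]
    nlinarith
  rw [abs_le] at hbal
  have hp0 : 0 < p := by linarith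
  have hq0 : 0 < q := by linarith
  have hpN : N / 4 ≤ p := by linarith
  have hqN : N / 4 ≤ q := by linarith
  refine ⟨fun v => if χ v then 1 / p else 0, fun v => if χ v then 0 else 1 / q, ?_, ?_, ?_, ?_⟩
  · constructor
    · intro v; by_cases hv : χ v <;> simp [hv] <;> positivity
    · have hsum : ∑ v : V, (if χ v then 1 / p else 0) = 1 := by
        have h1 : ∀ v : V, (if χ v then 1 / p else 0) = (if χ v then (1:ℝ) else 0) * (1 / p) := by
          intro v; split_ifs <;> ring
        rw [Finset.sum_congr rfl (fun v _ => h1 v), ← Finset.sum_mul, ← hpdef]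
        field_simp
      have hh := hasSum_fintype (fun v : V => if χ v then 1 / p else 0)
      rwa [hsum] at hh
  · constructor
    · intro v; by_cases hv : χ v <;> simp [hv] <;> positivity
    · have hsum : ∑ v : V, (if χ v then 0 else 1 / q) = 1 := by
        have h1 : ∀ v : V, (if χ v then (0:ℝ) else 1 / q) = (if χ v then (0:ℝ) else 1) * (1 / q) := by
          intro v; split_ifs <;> ring
        rw [Finset.sum_congr rfl (fun v _ => h1 v), ← Finset.sum_mul, ← hqdef]
        field_simp
      have hh := hasSum_fintype (fun v : V => if χ v then 0 else 1 / q)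
      rwa [hsum] at hh
  · rw [Set.disjoint_left]
    intro v h1 h2
    rw [Function.mem_support] at h1 h2
    by_cases hv : χ v
    · simp [hv] at h2
    · simp [hv] at h1
  · -- the IPM bound
    have hTV : ∀ d ∈ D, |LP1 (fun v => if χ v then 1 / p else 0) d -
        LP1 (fun v => if χ v then 0 else 1 / q) d| ≤ ε / 2 := by
      intro d hd
      have hdfin : d ∈ Dfin := (hmem d).2 hd
      set α : ℝ := ∑ v : V, (if χ v then (if d v then (1:ℝ) else 0) else 0) with hαdef
      set β : ℝ := ∑ v : V, (if χ v then (0:ℝ) else (if d v then 1 else 0)) with hβdef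
      have hL1 : LP1 (fun v => if χ v then 1 / p else 0) d = α / p := by
        rw [LP1, tsum_fintype, hαdef, Finset.sum_div]
        apply Finset.sum_congr rfl
        intro v _
        split_ifs <;> simp
      have hL2 : LP1 (fun v => if χ v then 0 else 1 / q) d = β / q := by
        rw [LP1, tsum_fintype, hβdef, Finset.sum_div]
        apply Finset.sum_congr rfl
        intro v _
        split_ifs <;> simp
      have hαβ : |α - β| ≤ Δ := by
        have hXd : α - β = Xd d χ := by
          rw [hαdef, hβdef, ← Finset.sum_sub_distrib, Xd]
          apply Finset.sum_congr rfl
          intro v _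
          split_ifs <;> ring
        rw [hXd]
        exact hχ d hdfin
      have hα0 : 0 ≤ α := Finset.sum_nonneg (fun v _ => by split_ifs <;> norm_num)
      have hβ0 : 0 ≤ β := Finset.sum_nonneg (fun v _ => by split_ifs <;> norm_num)
      have hαp : α ≤ p := by
        rw [hαdef, hpdef]
        apply Finset.sum_le_sum
        intro v _
        split_ifs <;> norm_num
      have hβq : β ≤ q := by
        rw [hβdef, hqdef]
        apply Finset.sum_le_sum
        intro v _
        split_ifs <;> norm_num
      have h4Δq : 4 * Δ ≤ ε * q := by
        rw [hΔdef]
        nlinarith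
      have h4Δp : 4 * Δ ≤ ε * p := by
        rw [hΔdef]
        nlinarith
      rw [hL1, hL2]
      exact final_est ε Δ p q α β hε0 hp0 hq0 hα0 hβ0 hαp hβq hαβ h4Δq h4Δp hbal.1 hbal.2
    have hle : IPM1 D (fun v => if χ v then 1 / p else 0)
        (fun v => if χ v then 0 else 1 / q) ≤ ε / 2 := by
      rw [IPM1]
      apply Real.iSup_le _ (by positivity)
      intro d
      apply Real.iSup_le _ (by positivity)
      intro hd
      exact hTV d hd
    linarith

end GraphDisc
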